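/- For |S| = N and d fixed, let p be a prime with p > N and p > d, let α₁,...,α_N be distinct nonzero elements of Z/pZ, and let H be the d×N matrix with H_{i,j} = α_j^i. Then the code C(H, β) = {u ∈ Z_{≥0}^N : H u ≡ β (mod p)} is an (N, d+1)-asymmetric error-correcting code: any two distinct codewords have asymmetric distance at least d+1. -/

import Mathlib

/-- `Δ(u,v) = Σ_i max(u_i - v_i, 0)` (natural-number truncated subtraction). -/
def Delta (N : ℕ) (u v : Fin N → ℕ) : ℕ := ∑ i, (u i - v i)

/-- The asymmetric distance `d_asym(u,v) = max(Δ(u,v), Δ(v,u))`. -/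
def dasym (N : ℕ) (u v : Fin N → ℕ) : ℕ := max (Delta N u v) (Delta N v u)

open Multiset Finset

variable {K : Type*} [Field K]

/-- Enumerate a multiset of card `n` by a function `Fin n → K`. -/
lemma exists_fn_of_card_eq {n : ℕ} {s : Multiset K} (h : Multiset.card s = n) :
    ∃ f : Fin n → K, Finset.univ.val.map f = s := by
  have hl : s.toList.length = n := by rw [Multiset.length_toList, h]
  refine ⟨fun i => s.toList.get (Fin.cast hl.symm i), ?_⟩
  rw [Fin.univ_val_map]
  have : List.ofFn (fun i : Fin n => s.toList.get (Fin.cast hl.symm i)) = s.toList := by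
    apply List.ext_get
    · simp [hl]
    · intro i h1 h2; simp
  rw [this, Multiset.coe_toList]

lemma eval_psum {n : ℕ} (f : Fin n → K) (k : ℕ) :
    MvPolynomial.aeval f (MvPolynomial.psum (Fin n) K k) = ((Finset.univ.val.map f).map (· ^ k)).sum := by
  simp only [MvPolynomial.psum, map_sum, map_pow, MvPolynomial.aeval_X, Multiset.map_map]
  rw [Finset.sum]
  rfl

lemma newton_step {n : ℕ} (f : Fin n → K) (k : ℕ) :
    (k : K) * (Finset.univ.val.map f).esymm k = (-1) ^ (k + 1) *
      ∑ a ∈ Finset.HasAntidiagonal.antidiagonal k with a.1 < k,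
        (-1) ^ a.1 * (Finset.univ.val.map f).esymm a.1 * ((Finset.univ.val.map f).map (· ^ a.2)).sum := by
  have := congrArg (MvPolynomial.aeval f) (MvPolynomial.mul_esymm_eq_sum (Fin n) K k)
  simp only [map_mul, map_sum, map_pow, map_neg, map_one, map_natCast, MvPolynomial.aeval_esymm_eq_multiset_esymm, eval_psum] at this
  simpa [MvPolynomial.aeval_esymm_eq_multiset_esymm, eval_psum, Finset.mul_sum] using this

lemma esymm_eq_of_psum_eq {p : ℕ} [Fact p.Prime] {d : ℕ} (hd : d < p)
    (A B : Multiset (ZMod p)) (hA : Multiset.card A = d) (hB : Multiset.card B = d)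
    (hps : ∀ k, 1 ≤ k → k ≤ d → (A.map (· ^ k)).sum = (B.map (· ^ k)).sum) :
    ∀ k ≤ d, A.esymm k = B.esymm k := by
  obtain ⟨f, hf⟩ := exists_fn_of_card_eq hA
  obtain ⟨g, hg⟩ := exists_fn_of_card_eq hB
  intro k
  induction k using Nat.strong_induction_on with
  | _ k ih =>
    intro hk
    rcases Nat.eq_zero_or_pos k with rfl | hk1
    · simp [Multiset.esymm]
    have h1 := newton_step f k
    have h2 := newton_step g k
    rw [hf] at h1; rw [hg] at h2
    have hsum : ∑ a ∈ Finset.HasAntidiagonal.antidiagonal k with a.1 < k,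
        (-1 : ZMod p) ^ a.1 * A.esymm a.1 * (A.map (· ^ a.2)).sum =
        ∑ a ∈ Finset.HasAntidiagonal.antidiagonal k with a.1 < k,
        (-1 : ZMod p) ^ a.1 * B.esymm a.1 * (B.map (· ^ a.2)).sum := by
      apply Finset.sum_congr rfl
      intro a ha
      simp only [Finset.mem_filter, Finset.HasAntidiagonal.mem_antidiagonal] at ha
      have h3 : a.2 = k - a.1 := by omega
      rw [ih a.1 ha.2 (by omega), hps a.2 (by omega) (by omega)]
    have hkne : (k : ZMod p) ≠ 0 := by
      intro h
      have := (ZMod.natCast_eq_zero_iff k p).mp h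
      have := Nat.le_of_dvd hk1 this
      omega
    exact mul_left_cancel₀ hkne (by rw [h1, h2, hsum])

lemma multiset_eq_of_esymm_eq {K : Type*} [Field K] {d : ℕ}
    (A B : Multiset K) (hA : Multiset.card A = d) (hB : Multiset.card B = d)
    (he : ∀ k ≤ d, A.esymm k = B.esymm k) : A = B := by
  have hprod : (A.map fun t => Polynomial.X - Polynomial.C t).prod =
      (B.map fun t => Polynomial.X - Polynomial.C t).prod := by
    rw [Multiset.prod_X_sub_X_eq_sum_esymm, Multiset.prod_X_sub_X_eq_sum_esymm, hA, hB]
    apply Finset.sum_congr rfl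
    intro j hj
    rw [Finset.mem_range] at hj
    rw [he j (by omega)]
  have := congrArg Polynomial.roots hprod
  rwa [Polynomial.roots_multiset_prod_X_sub_C, Polynomial.roots_multiset_prod_X_sub_C] at this

lemma pS_sum {ι K : Type*} [Field K] (t : Finset ι) (m : ι → ℕ) (x : ι → K) (k : ℕ) :
    (((∑ j ∈ t, Multiset.replicate (m j) (x j))).map (· ^ k)).sum
      = ∑ j ∈ t, (m j : K) * x j ^ k := by
  induction t using Finset.cons_induction with
  | empty => simp
  | cons a t ha ih =>
      simp [Finset.sum_cons, ih, Multiset.sum_replicate, nsmul_eq_mul]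

lemma count_sum_replicate {K : Type*} [DecidableEq K] {N : ℕ}
    (m : Fin N → ℕ) (x : Fin N → K) (hinj : Function.Injective x) (j : Fin N) :
    Multiset.count (x j) (∑ i, Multiset.replicate (m i) (x i)) = m j := by
  rw [Multiset.count_sum']
  have : ∀ i, Multiset.count (x j) (Multiset.replicate (m i) (x i))
      = if i = j then m i else 0 := by
    intro i
    rw [Multiset.count_replicate]
    by_cases h : i = j
    · simp [h]
    · rw [if_neg h, if_neg (fun hc => h (hinj hc))]
  simp [this]

lemma card_sum_replicate {ι K : Type*} (t : Finset ι) (m : ι → ℕ) (x : ι → K) :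
    Multiset.card (∑ j ∈ t, Multiset.replicate (m j) (x j)) = ∑ j ∈ t, m j := by
  induction t using Finset.cons_induction with
  | empty => simp
  | cons a t ha ih => simp [Finset.sum_cons, ih]

/-- Varshamov's construction: for a prime `p > N`, `p > d`, distinct nonzero
`α₁,...,α_N ∈ Z/pZ`, and `H` the `d × N` matrix with `H_{i,j} = α_j^i`
(`i = 1,...,d`), the code `C(H,β) = {u ∈ Z_{≥0}^N : Hu ≡ β (mod p)}` is an
`(N, d+1)`-asymmetric error-correcting code: any two distinct codewords have
asymmetric distance at least `d+1`. -/
theorem varshamov_aecc (N d p : ℕ) [Fact p.Prime] (hN : N < p) (hd : d < p)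
    (α : Fin N → ZMod p) (hinj : Function.Injective α) (hα : ∀ j, α j ≠ 0)
    (β : Fin d → ZMod p) (u v : Fin N → ℕ)
    (hu : ∀ i : Fin d, ∑ j, (u j : ZMod p) * α j ^ ((i : ℕ) + 1) = β i)
    (hv : ∀ i : Fin d, ∑ j, (v j : ZMod p) * α j ^ ((i : ℕ) + 1) = β i)
    (huv : u ≠ v) :
    d + 1 ≤ dasym N u v := by
  by_contra hcon
  push_neg at hcon
  rw [dasym] at hcon
  have h1 : Delta N u v ≤ d := by
    have := le_max_left (Delta N u v) (Delta N v u); omega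
  have h2 : Delta N v u ≤ d := by
    have := le_max_right (Delta N u v) (Delta N v u); omega
  set A : Multiset (ZMod p) := ∑ j, Multiset.replicate (u j - v j) (α j) with hAdef
  set B : Multiset (ZMod p) := ∑ j, Multiset.replicate (v j - u j) (α j) with hBdef
  have hcardA : Multiset.card A = Delta N u v := card_sum_replicate _ _ _
  have hcardB : Multiset.card B = Delta N v u := card_sum_replicate _ _ _
  set A' : Multiset (ZMod p) := A + Multiset.replicate (d - Multiset.card A) 0 with hA'def
  set B' : Multiset (ZMod p) := B + Multiset.replicate (d - Multiset.card B) 0 with hB'def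
  have hcardA' : Multiset.card A' = d := by simp [hA'def]; omega
  have hcardB' : Multiset.card B' = d := by simp [hB'def]; omega
  have hps : ∀ k, 1 ≤ k → k ≤ d → (A'.map (· ^ k)).sum = (B'.map (· ^ k)).sum := by
    intro k hk1 hkd
    have hz : ∀ m : ℕ, ((Multiset.replicate m (0 : ZMod p)).map (· ^ k)).sum = 0 := by
      intro m
      simp [Multiset.map_replicate, Multiset.sum_replicate, zero_pow (by omega : k ≠ 0)]
    have hAe : (A'.map (· ^ k)).sum = ∑ j, ((u j - v j : ℕ) : ZMod p) * α j ^ k := by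
      rw [hA'def, Multiset.map_add, Multiset.sum_add, hz, add_zero, hAdef, pS_sum]
    have hBe : (B'.map (· ^ k)).sum = ∑ j, ((v j - u j : ℕ) : ZMod p) * α j ^ k := by
      rw [hB'def, Multiset.map_add, Multiset.sum_add, hz, add_zero, hBdef, pS_sum]
    have hdiff : (A'.map (· ^ k)).sum - (B'.map (· ^ k)).sum = 0 := by
      rw [hAe, hBe, ← Finset.sum_sub_distrib]
      have : ∀ j, ((u j - v j : ℕ) : ZMod p) * α j ^ k - ((v j - u j : ℕ) : ZMod p) * α j ^ k
          = ((u j : ZMod p) - (v j : ZMod p)) * α j ^ k := by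
        intro j
        rw [← sub_mul]
        congr 1
        rcases le_total (u j) (v j) with h | h
        · rw [Nat.sub_eq_zero_of_le h, Nat.cast_sub h]; push_cast; ring
        · rw [Nat.sub_eq_zero_of_le h, Nat.cast_sub h]; push_cast; ring
      rw [Finset.sum_congr rfl fun j _ => this j]
      have hi : k - 1 < d := by omega
      have hk' : (⟨k - 1, hi⟩ : Fin d).val + 1 = k := by simp; omega
      have := hu ⟨k - 1, hi⟩
      have hvv := hv ⟨k - 1, hi⟩
      rw [hk'] at this hvv
      simp only [sub_mul, Finset.sum_sub_distrib, this, hvv, sub_self]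
    linear_combination hdiff
  have hAB' : A' = B' := by
    refine multiset_eq_of_esymm_eq A' B' hcardA' hcardB'
      (esymm_eq_of_psum_eq hd A' B' hcardA' hcardB' hps)
  have hcount : ∀ j, u j - v j = v j - u j := by
    intro j
    have := congrArg (Multiset.count (α j)) hAB'
    rw [hA'def, hB'def, Multiset.count_add, Multiset.count_add,
      Multiset.count_replicate, if_neg (fun h => hα j h.symm),
      Multiset.count_replicate, if_neg (fun h => hα j h.symm),
      hAdef, hBdef, count_sum_replicate _ _ hinj, count_sum_replicate _ _ hinj] at this
    simpa using this
  apply huv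
  funext j
  have := hcount j
  omega
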